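/- Let H ∈ ℝ^{d×d} be symmetric positive definite with eigenvalues λ₁ ≥ λ₂ ≥ … ≥ λ_d > 0 and condition number κ = λ₁/λ_d. Let D ∈ ℝ^{d×d} be a diagonal matrix whose diagonal entries satisfy c₁·λ₁ ≤ D_{ii} ≤ c₂·λ₁ for all i, where 0 < c₁ ≤ c₂ are real constants, and let 0 < η ≤ c₁. Then for every w ∈ ℝ^d, the preconditioned gradient step w⁺ = w − η·D⁻¹Hw satisfies ½·(w⁺)ᵀH w⁺ ≤ (1 − η²/(c₂²·κ))·½·wᵀHw. -/

import Mathlib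

open Matrix

section aux

variable {d : ℕ} (H : Matrix (Fin d) (Fin d) ℝ) (hH : H.IsHermitian)

lemma unitary_dot (U : Matrix (Fin d) (Fin d) ℝ) (hU : star U * U = 1)
    (x z : Fin d → ℝ) : (U *ᵥ x) ⬝ᵥ (U *ᵥ z) = x ⬝ᵥ z := by
  rw [dotProduct_mulVec, vecMul_mulVec]
  have h2 : Uᵀ * U = 1 := by
    have := hU
    rwa [Matrix.star_eq_conjTranspose, Matrix.conjTranspose_eq_transpose_of_trivial] at this
  rw [h2, vecMul_one]

lemma quad_forms (v : Fin d → ℝ) :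
    ∃ y : Fin d → ℝ,
      v ⬝ᵥ (H *ᵥ v) = ∑ i, hH.eigenvalues i * y i ^ 2 ∧
      v ⬝ᵥ v = ∑ i, y i ^ 2 ∧
      (H *ᵥ v) ⬝ᵥ (H *ᵥ v) = ∑ i, (hH.eigenvalues i) ^ 2 * y i ^ 2 := by
  set U : Matrix (Fin d) (Fin d) ℝ := (hH.eigenvectorUnitary : Matrix (Fin d) (Fin d) ℝ)
  have hU : star U * U = 1 := Unitary.coe_star_mul_self hH.eigenvectorUnitary
  have hU' : U * star U = 1 := Unitary.coe_mul_star_self hH.eigenvectorUnitary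
  set y : Fin d → ℝ := star U *ᵥ v with hy
  have hspec : H = U * diagonal hH.eigenvalues * star U := by
    have := hH.spectral_theorem
    simpa [RCLike.ofReal_real_eq_id, Function.comp] using this
  have hv : v = U *ᵥ y := by
    rw [hy, mulVec_mulVec, hU', one_mulVec]
  have hHv : H *ᵥ v = U *ᵥ (diagonal hH.eigenvalues *ᵥ y) := by
    rw [mulVec_mulVec, hy, mulVec_mulVec, ← hspec]
  refine ⟨y, ?_, ?_, ?_⟩
  · rw [hHv]
    conv_lhs => rw [hv]
    rw [unitary_dot U hU]
    simp only [dotProduct, mulVec_diagonal]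
    exact Finset.sum_congr rfl fun i _ => by ring
  · conv_lhs => rw [hv]
    rw [unitary_dot U hU]
    simp only [dotProduct]
    exact Finset.sum_congr rfl fun i _ => by ring
  · rw [hHv, unitary_dot U hU]
    simp only [dotProduct, mulVec_diagonal]
    exact Finset.sum_congr rfl fun i _ => by ring

lemma scalar_ineq (η lamd lam1 c₂ Q : ℝ) (hη : 0 < η) (hlamd0 : 0 < lamd)
    (hlam10 : 0 < lam1) (hc₂ : 0 < c₂) (hQ0 : 0 ≤ Q) (hηc₂ : η ≤ c₂) :
    η ^ 2 * lamd * Q * (c₂ * lam1) ≤ η * (lamd * Q) * (c₂ ^ 2 * lam1) := by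
  nlinarith [mul_nonneg (mul_nonneg (mul_nonneg (mul_nonneg hη.le hlamd0.le) hQ0)
    (mul_pos hc₂ hlam10).le) (sub_nonneg.mpr hηc₂)]

end aux

set_option maxHeartbeats 1000000 in
theorem diagonal_preconditioned_step_contraction
    (d : ℕ) (hd : 0 < d)
    (H : Matrix (Fin d) (Fin d) ℝ) (hH : H.IsHermitian) (hpos : H.PosDef)
    (lam1 lamd : ℝ)
    (hlam1 : lam1 = Finset.univ.sup' (Finset.univ_nonempty_iff.mpr ⟨⟨0, hd⟩⟩) hH.eigenvalues)
    (hlamd : lamd = Finset.univ.inf' (Finset.univ_nonempty_iff.mpr ⟨⟨0, hd⟩⟩) hH.eigenvalues)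
    (κ : ℝ) (hκ : κ = lam1 / lamd)
    (c₁ c₂ : ℝ) (hc₁ : 0 < c₁) (hc₁₂ : c₁ ≤ c₂)
    (D : Matrix (Fin d) (Fin d) ℝ) (f : Fin d → ℝ) (hD : D = Matrix.diagonal f)
    (hDlb : ∀ i, c₁ * lam1 ≤ f i) (hDub : ∀ i, f i ≤ c₂ * lam1)
    (η : ℝ) (hη : 0 < η) (hηc : η ≤ c₁)
    (w wplus : Fin d → ℝ) (hwplus : wplus = w - η • (D⁻¹ *ᵥ (H *ᵥ w))) :
    (1 / 2) * (wplus ⬝ᵥ (H *ᵥ wplus)) ≤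
      (1 - η ^ 2 / (c₂ ^ 2 * κ)) * ((1 / 2) * (w ⬝ᵥ (H *ᵥ w))) := by
  -- basic positivity
  have hc₂ : 0 < c₂ := lt_of_lt_of_le hc₁ hc₁₂
  have hlamd0 : 0 < lamd := by
    rw [hlamd]
    exact (Finset.lt_inf'_iff _).mpr fun i _ => hpos.eigenvalues_pos i
  have hlam_le : ∀ i, hH.eigenvalues i ≤ lam1 := fun i =>
    hlam1 ▸ Finset.le_sup' _ (Finset.mem_univ i)
  have hlam_ge : ∀ i, lamd ≤ hH.eigenvalues i := fun i =>
    hlamd ▸ Finset.inf'_le _ (Finset.mem_univ i)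
  have hlam10 : 0 < lam1 := lt_of_lt_of_le hlamd0 (le_trans (hlam_ge ⟨0, hd⟩) (hlam_le ⟨0, hd⟩))
  have hf0 : ∀ i, 0 < f i := fun i => lt_of_lt_of_le (by positivity) (hDlb i)
  -- D⁻¹ is diagonal of the inverses
  have hDinv : D⁻¹ = diagonal (fun i => (f i)⁻¹) := by
    rw [hD]
    apply inv_eq_right_inv
    rw [diagonal_mul_diagonal]
    ext i j
    rcases eq_or_ne i j with rfl | h
    · simp [mul_inv_cancel₀ (hf0 i).ne']
    · simp [diagonal_apply_ne _ h, Matrix.one_apply_ne h]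
  set Q : ℝ := w ⬝ᵥ (H *ᵥ w) with hQ
  set g : Fin d → ℝ := H *ᵥ w with hg
  set v : Fin d → ℝ := fun i => (f i)⁻¹ * g i with hv
  have hvv : D⁻¹ *ᵥ g = v := by
    rw [hDinv]
    funext i
    simp [mulVec_diagonal, hv]
  -- symmetry of H
  have hHt : Hᵀ = H := by
    rw [← conjTranspose_eq_transpose_of_trivial, hH.eq]
  have hsym : ∀ a b : Fin d → ℝ, a ⬝ᵥ (H *ᵥ b) = (H *ᵥ a) ⬝ᵥ b := fun a b => by
    rw [dotProduct_mulVec, ← mulVec_transpose, hHt]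
  -- scalar quantities
  set S : ℝ := ∑ i, (f i)⁻¹ * g i ^ 2 with hS
  set T : ℝ := v ⬝ᵥ (H *ᵥ v) with hT
  -- expansion of the step
  have hgv : g ⬝ᵥ v = S := by
    simp only [dotProduct, hS]
    exact Finset.sum_congr rfl fun i _ => by simp [hv]; ring
  have hexp : wplus ⬝ᵥ (H *ᵥ wplus) = Q - 2 * η * S + η ^ 2 * T := by
    rw [hwplus, hvv]
    have h1 : H *ᵥ (w - η • v) = g - η • (H *ᵥ v) := by
      rw [mulVec_sub, mulVec_smul]
    rw [h1]
    simp only [sub_dotProduct, dotProduct_sub, smul_dotProduct, dotProduct_smul, smul_eq_mul]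
    rw [hsym w v, dotProduct_comm v g, hgv]
    rw [hQ, hT]
    ring
  -- eigen-decompositions
  obtain ⟨y, hyQ, -, hyG⟩ := quad_forms H hH w
  obtain ⟨z, hzT, hzN, -⟩ := quad_forms H hH v
  have hQ0 : 0 ≤ Q := by
    rw [hQ, hyQ]
    exact Finset.sum_nonneg fun i _ => by
      have h2 : (0:ℝ) < hH.eigenvalues i := hpos.eigenvalues_pos i
      nlinarith [sq_nonneg (y i)]
  have hS0 : 0 ≤ S := Finset.sum_nonneg fun i _ =>
    mul_nonneg (inv_nonneg.mpr (hf0 i).le) (sq_nonneg _)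
  -- T ≤ lam1 * N and N ≤ (c₁ lam1)⁻¹ S  ⇒ T ≤ S / c₁
  have hTN : T ≤ lam1 * (v ⬝ᵥ v) := by
    rw [hT, hzT, hzN, Finset.mul_sum]
    exact Finset.sum_le_sum fun i _ =>
      mul_le_mul_of_nonneg_right (hlam_le i) (sq_nonneg _)
  have hN : v ⬝ᵥ v ≤ (c₁ * lam1)⁻¹ * S := by
    rw [hS, Finset.mul_sum]
    simp only [dotProduct]
    refine Finset.sum_le_sum fun i _ => ?_
    have h1 : (f i)⁻¹ ≤ (c₁ * lam1)⁻¹ := inv_anti₀ (mul_pos hc₁ hlam10) (hDlb i)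
    have h2 : (0:ℝ) ≤ (f i)⁻¹ * g i ^ 2 := mul_nonneg (inv_nonneg.mpr (hf0 i).le) (sq_nonneg _)
    calc v i * v i = (f i)⁻¹ * ((f i)⁻¹ * g i ^ 2) := by rw [hv]; ring
      _ ≤ (c₁ * lam1)⁻¹ * ((f i)⁻¹ * g i ^ 2) := mul_le_mul_of_nonneg_right h1 h2
  have hTle : T ≤ S / c₁ := by
    have h3 : lam1 * ((c₁ * lam1)⁻¹ * S) = S / c₁ := by
      rw [mul_inv]
      field_simp
    calc T ≤ lam1 * (v ⬝ᵥ v) := hTN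
      _ ≤ lam1 * ((c₁ * lam1)⁻¹ * S) :=
          mul_le_mul_of_nonneg_left hN (le_of_lt hlam10)
      _ = S / c₁ := h3
  -- S ≥ lamd * Q / (c₂ * lam1)
  have hGQ : lamd * Q ≤ g ⬝ᵥ g := by
    rw [hQ, hyQ, hg, hyG, Finset.mul_sum]
    refine Finset.sum_le_sum fun i _ => ?_
    have h1 := hlam_ge i
    have h2 : (0:ℝ) < hH.eigenvalues i := hpos.eigenvalues_pos i
    nlinarith [sq_nonneg (y i), mul_nonneg (mul_nonneg (sub_nonneg.mpr h1) h2.le) (sq_nonneg (y i))]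
  have hSG : (g ⬝ᵥ g) / (c₂ * lam1) ≤ S := by
    rw [hS, div_eq_mul_inv, dotProduct, Finset.sum_mul]
    refine Finset.sum_le_sum fun i _ => ?_
    have h1 : (c₂ * lam1)⁻¹ ≤ (f i)⁻¹ := inv_anti₀ (hf0 i) (hDub i)
    calc g i * g i * (c₂ * lam1)⁻¹ = (c₂ * lam1)⁻¹ * g i ^ 2 := by ring
      _ ≤ (f i)⁻¹ * g i ^ 2 := mul_le_mul_of_nonneg_right h1 (sq_nonneg _)
  have hSQ : lamd * Q / (c₂ * lam1) ≤ S := by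
    refine le_trans ?_ hSG
    gcongr
  clear_value Q g v S T
  -- step contraction
  have hstep : wplus ⬝ᵥ (H *ᵥ wplus) ≤ Q - η * S := by
    rw [hexp]
    have h1 : η ^ 2 * T ≤ η ^ 2 * (S / c₁) := mul_le_mul_of_nonneg_left hTle (by positivity)
    have h2 : η ^ 2 * (S / c₁) ≤ η * S := by
      rw [mul_div_assoc', div_le_iff₀ hc₁]
      nlinarith [mul_nonneg (mul_nonneg hη.le hS0) (sub_nonneg.mpr hηc)]
    linarith
  have heQ : η ^ 2 / (c₂ ^ 2 * κ) * Q ≤ η * S := by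
    rw [hκ]
    have he : η ^ 2 / (c₂ ^ 2 * (lam1 / lamd)) = η ^ 2 * lamd / (c₂ ^ 2 * lam1) := by
      rw [show c₂ ^ 2 * (lam1 / lamd) = (c₂ ^ 2 * lam1) / lamd by ring,
        div_div_eq_mul_div]
    rw [he]
    have h1 : η * (lamd * Q / (c₂ * lam1)) ≤ η * S := mul_le_mul_of_nonneg_left hSQ hη.le
    refine le_trans ?_ h1
    rw [div_mul_eq_mul_div, mul_div_assoc',
      div_le_div_iff₀ (mul_pos (pow_pos hc₂ 2) hlam10) (mul_pos hc₂ hlam10)]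
    exact scalar_ineq η lamd lam1 c₂ Q hη hlamd0 hlam10 hc₂ hQ0 (hηc.trans hc₁₂)
  have hfinal : wplus ⬝ᵥ (H *ᵥ wplus) ≤ (1 - η ^ 2 / (c₂ ^ 2 * κ)) * Q := by
    have h3 : (1 - η ^ 2 / (c₂ ^ 2 * κ)) * Q = Q - η ^ 2 / (c₂ ^ 2 * κ) * Q := by ring
    rw [h3]
    linarith
  calc (1/2) * (wplus ⬝ᵥ (H *ᵥ wplus)) ≤ (1/2) * ((1 - η ^ 2 / (c₂ ^ 2 * κ)) * Q) := by linarith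
    _ = (1 - η ^ 2 / (c₂ ^ 2 * κ)) * ((1/2) * Q) := by ring
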